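/- Let N ≥ 2 and let H be a Hilbert space. (a) If S_0, …, S_{N−1} are bounded operators on H satisfying the Cuntz relations S_i* S_j = δ_{ij}·1 and ∑_i S_i S_i* = 1, and S_0 is a shift (⋂_{n≥1} S_0^n H = {0}), then the operators T_k^{(j)} := S_0^{k−1} S_j for j = 1, …, N−1 and k = 1, 2, … satisfy T_{k₁}^{(j₁)*} T_{k₂}^{(j₂)} = δ_{j₁ j₂} δ_{k₁ k₂}·1 and ∑_{j=1}^{N−1} ∑_{k=1}^{∞} T_k^{(j)} T_k^{(j)*} = 1 (the sum converging in the strong operator topology), and moreover S_0 = ∑_{k=1}^{∞} ∑_{j=1}^{N−1} T_{k+1}^{(j)} T_k^{(j)*} (strongly) and S_j = T_1^{(j)} for j = 1, …, N−1. (b) Conversely, if operators T_k^{(j)} (j = 1, …, N−1, k ≥ 1) on H satisfy T_{k₁}^{(j₁)*} T_{k₂}^{(j₂)} = δ_{j₁ j₂} δ_{k₁ k₂}·1 and ∑_{j,k} T_k^{(j)} T_k^{(j)*} = 1, then S_0 := ∑_{k,j} T_{k+1}^{(j)} T_k^{(j)*} (strong convergence) and S_j := T_1^{(j)} satisfy the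 Cuntz relations, S_0 is a shift, and T_k^{(j)} = S_0^{k−1} S_j. -/

import Mathlib

open MeasureTheory ContinuousLinearMap

noncomputable section

section CuntzAuxSection
open ContinuousLinearMap
namespace CuntzAux
variable {H : Type*} [NormedAddCommGroup H] [InnerProductSpace ℂ H] [CompleteSpace H]
local notation "⟪" x ", " y "⟫" => @inner ℂ _ _ x y

lemma norm_apply_of_isom (A : H →L[ℂ] H) (h : star A * A = 1) (x : H) :
    ‖A x‖ = ‖x‖ := by
  have h1 : ⟪A x, A x⟫ = ⟪x, x⟫ := by
    rw [← adjoint_inner_left, ← star_eq_adjoint]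
    have : star A (A x) = (star A * A) x := rfl
    rw [this, h, one_apply_eq_self]
  have h2 : ‖A x‖ ^ 2 = ‖x‖ ^ 2 := by
    rw [← inner_self_eq_norm_sq (𝕜 := ℂ), ← inner_self_eq_norm_sq (𝕜 := ℂ), h1]
  nlinarith [norm_nonneg (A x), norm_nonneg x]

/-- Summing orthogonal "projection pieces" of ξ. -/
lemma hasSum_of_orthogonal {ι : Type*} (v : ι → H) (ξ : H)
    (ho : ∀ p q, p ≠ q → ⟪v p, v q⟫ = 0)
    (hi : ∀ p, ⟪ξ, v p⟫ = ((‖v p‖ ^ 2 : ℝ) : ℂ))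
    (hs : HasSum (fun p => (‖v p‖ ^ 2 : ℝ)) (‖ξ‖ ^ 2)) : HasSum v ξ := by
  have hF : ∀ F : Finset ι, ‖ξ - ∑ p ∈ F, v p‖ ^ 2 = ‖ξ‖ ^ 2 - ∑ p ∈ F, ‖v p‖ ^ 2 := by
    intro F
    have h1 : ⟪ξ, ∑ p ∈ F, v p⟫ = ((∑ p ∈ F, ‖v p‖ ^ 2 : ℝ) : ℂ) := by
      rw [inner_sum]
      push_cast
      exact Finset.sum_congr rfl fun p _ => by rw [hi p]; push_cast; rfl
    have h2c : ⟪(∑ p ∈ F, v p), ∑ p ∈ F, v p⟫ = ((∑ p ∈ F, ‖v p‖ ^ 2 : ℝ) : ℂ) := by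
      rw [sum_inner]
      rw [show ((∑ p ∈ F, ‖v p‖ ^ 2 : ℝ) : ℂ) = ∑ p ∈ F, ((‖v p‖ ^ 2 : ℝ) : ℂ) by push_cast; ring]
      refine Finset.sum_congr rfl fun p hp => ?_
      rw [inner_sum, Finset.sum_eq_single p (fun q hq hne => ho p q (Ne.symm hne)) (by simp [hp])]
      rw [inner_self_eq_norm_sq_to_K (𝕜 := ℂ) (v p)]; push_cast; rfl
    have h2 : (‖∑ p ∈ F, v p‖ ^ 2 : ℝ) = ∑ p ∈ F, ‖v p‖ ^ 2 := by
      rw [← inner_self_eq_norm_sq (𝕜 := ℂ), h2c]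
      simp [RCLike.re_to_complex, ← Complex.ofReal_pow]
    rw [norm_sub_sq (𝕜 := ℂ), h1, h2]
    have : RCLike.re (((∑ p ∈ F, ‖v p‖ ^ 2 : ℝ)) : ℂ) = ∑ p ∈ F, ‖v p‖ ^ 2 :=
      Complex.ofReal_re _
    rw [this]; ring
  rw [HasSum, tendsto_iff_norm_sub_tendsto_zero]
  have key : ∀ F : Finset ι, ‖(∑ p ∈ F, v p) - ξ‖ = Real.sqrt (‖ξ‖ ^ 2 - ∑ p ∈ F, ‖v p‖ ^ 2) := by
    intro F
    rw [← hF F, ← norm_sub_rev, Real.sqrt_sq (norm_nonneg _)]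
  simp only [key]
  have h0 : Filter.Tendsto (fun F : Finset ι => ‖ξ‖ ^ 2 - ∑ p ∈ F, ‖v p‖ ^ 2)
      Filter.atTop (nhds 0) := by
    have := (tendsto_const_nhds (x := ‖ξ‖ ^ 2)).sub hs
    rwa [sub_self] at this
  simpa [Real.sqrt_zero] using h0.sqrt


section PartA
variable {N : ℕ} [NeZero N] (S : Fin N → H →L[ℂ] H)
  (hrel : ∀ i j, (adjoint (S i)).comp (S j) = if i = j then (1 : H →L[ℂ] H) else 0)

include hrel

-- star/mul form of the relations
lemma hrel' (i j : Fin N) : star (S i) * S j = if i = j then (1 : H →L[ℂ] H) else 0 := by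
  rw [star_eq_adjoint, mul_def]; exact hrel i j

lemma hpowA (k : ℕ) : star (S 0 ^ k) * S 0 ^ k = 1 := by
  induction k with
  | zero => simp
  | succ k ih =>
      rw [pow_succ, star_mul, mul_assoc (star (S 0)), ← mul_assoc (star (S 0 ^ k)), ih,
        one_mul]
      simpa using hrel' S hrel 0 0

lemma hshiftpow (k d : ℕ) : star (S 0 ^ k) * S 0 ^ (k + d) = S 0 ^ d := by
  rw [pow_add, ← mul_assoc, hpowA S hrel, one_mul]

/-- star-mul version of the `𝒪_∞` relations for `T j k = S₀^k S j`. -/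
lemma keyrel (j₁ j₂ : {j : Fin N // j ≠ 0}) (k d : ℕ) :
    star (S 0 ^ k * S j₁) * (S 0 ^ (k + d) * S j₂)
      = if j₁ = j₂ ∧ d = 0 then (1 : H →L[ℂ] H) else 0 := by
  have hmid : star (S 0 ^ k * S ↑j₁) * (S 0 ^ (k + d) * S ↑j₂)
      = star (S ↑j₁) * (star (S 0 ^ k) * S 0 ^ (k + d)) * S ↑j₂ := by
    rw [star_mul]; simp only [mul_assoc]
  rw [hmid, hshiftpow S hrel]
  cases d with
  | zero =>
      rw [pow_zero, mul_one, hrel' S hrel]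
      by_cases h : (j₁ : Fin N) = (j₂ : Fin N)
      · rw [if_pos h, if_pos ⟨Subtype.ext h, rfl⟩]
      · rw [if_neg h, if_neg (fun hh => h (congrArg Subtype.val hh.1))]
  | succ e =>
      have h0 : star (S ↑j₁) * S 0 = 0 := by
        rw [hrel' S hrel]; simp [j₁.2]
      rw [pow_succ', ← mul_assoc, h0, zero_mul, zero_mul]
      simp

lemma Trel (j₁ j₂ : {j : Fin N // j ≠ 0}) (k₁ k₂ : ℕ) :
    star (S 0 ^ k₁ * S j₁) * (S 0 ^ k₂ * S j₂)
      = if j₁ = j₂ ∧ k₁ = k₂ then (1 : H →L[ℂ] H) else 0 := by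
  rcases le_total k₁ k₂ with h | h
  · obtain ⟨d, rfl⟩ := Nat.exists_eq_add_of_le h
    rw [keyrel S hrel]
    congr 1
    simp only [eq_iff_iff, and_congr_right_iff]
    intro _; omega
  · obtain ⟨d, rfl⟩ := Nat.exists_eq_add_of_le h
    have := congrArg star (keyrel S hrel j₂ j₁ k₂ d)
    rw [star_mul, star_star] at this
    rw [this]
    by_cases h1 : j₂ = j₁ ∧ d = 0
    · rw [if_pos h1, if_pos ⟨h1.1.symm, by omega⟩, star_one]
    · rw [if_neg h1, if_neg (by rintro ⟨a, b⟩; exact h1 ⟨a.symm, by omega⟩), star_zero]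

end PartA
end CuntzAux

namespace CuntzAux2
open CuntzAux
variable {H : Type*} [NormedAddCommGroup H] [InnerProductSpace ℂ H] [CompleteSpace H]
variable {N : ℕ} [NeZero N] (S : Fin N → H →L[ℂ] H)
  (hrel : ∀ i j, (ContinuousLinearMap.adjoint (S i)).comp (S j) = if i = j then (1 : H →L[ℂ] H) else 0)
  (hsum1 : ∑ i, (S i).comp (ContinuousLinearMap.adjoint (S i)) = (1 : H →L[ℂ] H))
local notation "⟪" x ", " y "⟫" => @inner ℂ _ _ x y

include hsum1 in
lemma col_sum (y : H) :
    ∑ i : Fin N, ‖adjoint (S i) y‖ ^ 2 = ‖y‖ ^ 2 := by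
  have h1 : ⟪y, y⟫ = ∑ i, ((‖adjoint (S i) y‖ : ℂ)) ^ 2 := by
    calc ⟪y, y⟫ = ⟪(∑ i, (S i).comp (adjoint (S i))) y, y⟫ := by rw [hsum1, one_apply_eq_self]
    _ = ∑ i, ⟪(S i) (adjoint (S i) y), y⟫ := by
        rw [ContinuousLinearMap.sum_apply, sum_inner]
        exact Finset.sum_congr rfl fun i _ => rfl
    _ = ∑ i, ((‖adjoint (S i) y‖ : ℂ)) ^ 2 := Finset.sum_congr rfl fun i _ => by
        rw [← adjoint_inner_right, inner_self_eq_norm_sq_to_K]; rfl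
  conv_rhs => rw [← inner_self_eq_norm_sq (𝕜 := ℂ) y]
  rw [h1]
  simp [RCLike.re_to_complex, ← Complex.ofReal_pow]

include hrel hsum1 in
set_option maxHeartbeats 1000000 in
lemma norm_sq_hasSum
    (hshift : (⋂ n : ℕ, Set.range ⇑(S 0 ^ (n + 1))) = {0}) (ξ : H) :
    HasSum (fun p : {j : Fin N // j ≠ 0} × ℕ =>
      ‖adjoint (S 0 ^ p.2 * S p.1) ξ‖ ^ 2) (‖ξ‖ ^ 2) := by
  set A := S 0 with hA
  set u : ℕ → H := fun n => adjoint (A ^ n) ξ with hu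
  have hu0 : u 0 = ξ := by
    simp only [hu, pow_zero, ← star_eq_adjoint, star_one, one_apply_eq_self]
  have husucc : ∀ n, u (n + 1) = adjoint A (u n) := by
    intro n
    have h : adjoint (A ^ (n + 1)) = adjoint A * adjoint (A ^ n) := by
      rw [← star_eq_adjoint, ← star_eq_adjoint, ← star_eq_adjoint, pow_succ, star_mul]
    simp only [hu, h]; rfl
  have hw : ∀ (j : {j : Fin N // j ≠ 0}) (n : ℕ),
      adjoint (A ^ n * S j) ξ = adjoint (S j) (u n) := by
    intro j n
    have h : adjoint (A ^ n * S (j : Fin N)) = adjoint (S (j : Fin N)) * adjoint (A ^ n) := by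
      rw [← star_eq_adjoint, ← star_eq_adjoint, ← star_eq_adjoint, star_mul]
    simp only [h]; rfl
  have hgrid : ∀ n : ℕ,
      ∑ p ∈ (Finset.univ : Finset {j : Fin N // j ≠ 0}) ×ˢ Finset.range n,
        ‖adjoint (A ^ p.2 * S p.1) ξ‖ ^ 2 = ‖ξ‖ ^ 2 - ‖u n‖ ^ 2 := by
    intro n
    induction n with
    | zero => simp [hu0]
    | succ n ih =>
        rw [Finset.sum_product] at ih ⊢
        have hcolsum : ∑ j : {j : Fin N // j ≠ 0}, ‖adjoint (A ^ n * S j) ξ‖ ^ 2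
            = ‖u n‖ ^ 2 - ‖u (n + 1)‖ ^ 2 := by
          have e1 : ∑ j : {j : Fin N // j ≠ 0}, ‖adjoint (A ^ n * S j) ξ‖ ^ 2
              = ∑ j ∈ Finset.univ.erase (0 : Fin N), ‖adjoint (S j) (u n)‖ ^ 2 := by
            have e1a : ∑ j : {j : Fin N // j ≠ 0}, ‖adjoint (A ^ n * S j) ξ‖ ^ 2
                = ∑ j : {j : Fin N // j ≠ 0}, ‖adjoint (S (j : Fin N)) (u n)‖ ^ 2 :=
              Finset.sum_congr rfl fun j _ => by rw [hw]
            rw [e1a]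
            exact (Finset.sum_subtype (p := fun j : Fin N => j ≠ 0)
              (s := Finset.univ.erase 0)
              (f := fun j => ‖adjoint (S j) (u n)‖ ^ 2) (fun x => by simp)).symm
          have e2 := Finset.add_sum_erase Finset.univ
            (fun i => ‖adjoint (S i) (u n)‖ ^ 2) (Finset.mem_univ (0 : Fin N))
          rw [col_sum S hsum1 (u n)] at e2
          have e4 : u (n + 1) = adjoint (S 0) (u n) := husucc n
          rw [e1, e4]
          linarith [e2]
        have e3 : ∀ j : {j : Fin N // j ≠ 0},
            ∑ k ∈ Finset.range (n + 1), ‖adjoint (A ^ k * S j) ξ‖ ^ 2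
            = (∑ k ∈ Finset.range n, ‖adjoint (A ^ k * S j) ξ‖ ^ 2)
              + ‖adjoint (A ^ n * S j) ξ‖ ^ 2 := fun j => Finset.sum_range_succ _ _
        simp only [e3, Finset.sum_add_distrib, ih, hcolsum]
        ring
  -- the projections E n ξ and their limit
  set e : ℕ → H := fun n => (A ^ n) (u n) with he
  have hnorm_e : ∀ n, ‖e n‖ = ‖u n‖ := fun n =>
    norm_apply_of_isom (A ^ n) (hpowA S hrel n) (u n)
  have hinner : ∀ n d, ⟪e n, e (n + d)⟫ = ((‖u (n + d)‖ : ℂ)) ^ 2 := by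
    intro n d
    have h1 : ⟪e n, e (n + d)⟫ = ⟪u n, adjoint (A ^ n) ((A ^ (n + d)) (u (n + d)))⟫ := by
      rw [adjoint_inner_right]
    have h2 : adjoint (A ^ n) ((A ^ (n + d)) (u (n + d))) = (A ^ d) (u (n + d)) := by
      have : adjoint (A ^ n) ((A ^ (n + d)) (u (n + d)))
          = (star (A ^ n) * A ^ (n + d)) (u (n + d)) := by
        rw [star_eq_adjoint]; rfl
      rw [this, hshiftpow S hrel]
    have h3 : adjoint (A ^ d) (u n) = u (n + d) := by
      have : adjoint (A ^ (n + d)) = adjoint (A ^ d) * adjoint (A ^ n) := by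
        rw [← star_eq_adjoint, ← star_eq_adjoint, ← star_eq_adjoint, pow_add, star_mul]
      simp only [hu, this]; rfl
    rw [h1, h2, ← adjoint_inner_left, h3, inner_self_eq_norm_sq_to_K]; rfl
  have hdiff : ∀ n d, ‖e n - e (n + d)‖ ^ 2 = ‖u n‖ ^ 2 - ‖u (n + d)‖ ^ 2 := by
    intro n d
    rw [norm_sub_sq (𝕜 := ℂ), hinner n d, hnorm_e, hnorm_e]
    have : RCLike.re ((‖u (n + d)‖ : ℂ) ^ 2) = ‖u (n + d)‖ ^ 2 := by
      simp [RCLike.re_to_complex, ← Complex.ofReal_pow]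
    rw [this]; ring
  set b : ℕ → ℝ := fun n => ‖u n‖ ^ 2 with hb
  have hanti : Antitone b := antitone_nat_of_succ_le fun n => by
    have h := hdiff n 1
    have h2 := sq_nonneg ‖e n - e (n + 1)‖
    show ‖u (n + 1)‖ ^ 2 ≤ ‖u n‖ ^ 2
    linarith
  have hcauchy : CauchySeq e := by
    rw [Metric.cauchySeq_iff']
    intro ε hε
    have hbd : BddBelow (Set.range b) := ⟨0, by rintro x ⟨n, rfl⟩; positivity⟩
    have hconv := tendsto_atTop_ciInf hanti hbd
    set L := ⨅ n, b n with hL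
    obtain ⟨M, hM⟩ := (Metric.tendsto_atTop.mp hconv) (ε ^ 2) (by positivity)
    refine ⟨M, fun n hn => ?_⟩
    obtain ⟨d, rfl⟩ := Nat.exists_eq_add_of_le hn
    have h1 : ‖e M - e (M + d)‖ ^ 2 = b M - b (M + d) := hdiff M d
    have h2 : b M - L < ε ^ 2 := by
      have := hM M le_rfl
      rw [Real.dist_eq, abs_lt] at this
      linarith [this.2]
    have h3 : L ≤ b (M + d) := ciInf_le hbd (M + d)
    have h4 : ‖e (M + d) - e M‖ ^ 2 < ε ^ 2 := by
      rw [norm_sub_rev]; linarith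
    rw [dist_eq_norm]
    nlinarith [norm_nonneg (e (M + d) - e M)]
  obtain ⟨η, htend⟩ := cauchySeq_tendsto_of_complete hcauchy
  have hηmem : η ∈ ⋂ n : ℕ, Set.range ⇑(A ^ (n + 1)) := by
    refine Set.mem_iInter.mpr fun n => ?_
    have hclosed : IsClosed (Set.range ⇑(A ^ (n + 1))) :=
      ((AddMonoidHomClass.isometry_of_norm (A ^ (n + 1))
        (norm_apply_of_isom (A ^ (n + 1)) (hpowA S hrel (n + 1)))).isClosedEmbedding).isClosed_range
    refine hclosed.mem_of_tendsto htend ?_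
    refine Filter.eventually_atTop.mpr ⟨n + 1, fun m hm => ?_⟩
    obtain ⟨d, rfl⟩ := Nat.exists_eq_add_of_le hm
    refine ⟨(A ^ d) (u (n + 1 + d)), ?_⟩
    have : A ^ (n + 1 + d) = A ^ (n + 1) * A ^ d := by rw [pow_add]
    simp only [he, this]; rfl
  have hη0 : η = 0 := by
    have := hshift ▸ hηmem
    simpa using this
  have hbzero : Filter.Tendsto b Filter.atTop (nhds 0) := by
    have h1 : Filter.Tendsto (fun n => ‖e n‖) Filter.atTop (nhds 0) := by
      have := htend.norm
      rw [hη0, norm_zero] at this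
      exact this
    have h2 : Filter.Tendsto (fun n => ‖e n‖ ^ 2) Filter.atTop (nhds 0) := by
      have := h1.pow 2
      simpa using this
    refine h2.congr fun n => ?_
    rw [hnorm_e]
  -- conclude via IsLUB
  refine hasSum_of_isLUB_of_nonneg _ (fun p => sq_nonneg _) ?_
  constructor
  · rintro x ⟨F, rfl⟩
    set n := (F.sup fun p => p.2) + 1 with hn
    have hsub : F ⊆ (Finset.univ : Finset {j : Fin N // j ≠ 0}) ×ˢ Finset.range n := by
      intro p hp
      refine Finset.mem_product.mpr ⟨Finset.mem_univ _, Finset.mem_range.mpr ?_⟩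
      have := Finset.le_sup (f := fun p : {j : Fin N // j ≠ 0} × ℕ => p.2) hp
      exact Nat.lt_succ_of_le (by simpa using this)
    calc ∑ p ∈ F, ‖adjoint (A ^ p.2 * S p.1) ξ‖ ^ 2
        ≤ ∑ p ∈ (Finset.univ : Finset {j : Fin N // j ≠ 0}) ×ˢ Finset.range n,
            ‖adjoint (A ^ p.2 * S p.1) ξ‖ ^ 2 :=
          Finset.sum_le_sum_of_subset_of_nonneg hsub fun p _ _ => sq_nonneg _
    _ = ‖ξ‖ ^ 2 - ‖u n‖ ^ 2 := hgrid n
    _ ≤ ‖ξ‖ ^ 2 := by nlinarith [sq_nonneg ‖u n‖]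
  · intro x hx
    have hc : Filter.Tendsto (fun n => ‖ξ‖ ^ 2 - b n) Filter.atTop (nhds (‖ξ‖ ^ 2)) := by
      have := (tendsto_const_nhds (x := ‖ξ‖ ^ 2)).sub hbzero
      simpa using this
    refine le_of_tendsto' hc fun n => ?_
    have : ‖ξ‖ ^ 2 - b n = ∑ p ∈ (Finset.univ : Finset {j : Fin N // j ≠ 0}) ×ˢ Finset.range n,
        ‖adjoint (A ^ p.2 * S p.1) ξ‖ ^ 2 := (hgrid n).symm
    rw [this]
    exact hx ⟨_, rfl⟩

end CuntzAux2

namespace CuntzAux3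
open CuntzAux CuntzAux2
variable {H : Type*} [NormedAddCommGroup H] [InnerProductSpace ℂ H] [CompleteSpace H]
variable {N : ℕ} [NeZero N] (S : Fin N → H →L[ℂ] H)
  (hrel : ∀ i j, (ContinuousLinearMap.adjoint (S i)).comp (S j) = if i = j then (1 : H →L[ℂ] H) else 0)
  (hsum1 : ∑ i, (S i).comp (ContinuousLinearMap.adjoint (S i)) = (1 : H →L[ℂ] H))
local notation "⟪" x ", " y "⟫" => @inner ℂ _ _ x y
open ContinuousLinearMap

include hrel in
lemma hBrel (p q : {j : Fin N // j ≠ 0} × ℕ) :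
    (adjoint (S 0 ^ p.2 * S p.1)).comp (S 0 ^ q.2 * S q.1)
      = if p = q then (1 : H →L[ℂ] H) else 0 := by
  have h := Trel S hrel p.1 q.1 p.2 q.2
  rw [star_eq_adjoint, mul_def] at h
  rw [h]
  by_cases hpq : p = q
  · rw [if_pos hpq, if_pos ⟨congrArg Prod.fst hpq, congrArg Prod.snd hpq⟩]
  · rw [if_neg hpq, if_neg fun hh => hpq (Prod.ext hh.1 hh.2)]

include hrel hsum1 in
lemma partA_hasSum (hshift : (⋂ n : ℕ, Set.range ⇑(S 0 ^ (n + 1))) = {0}) (ξ : H) :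
    HasSum (fun p : {j : Fin N // j ≠ 0} × ℕ =>
      (S 0 ^ p.2 * S p.1) (adjoint (S 0 ^ p.2 * S p.1) ξ)) ξ := by
  set B : {j : Fin N // j ≠ 0} × ℕ → H →L[ℂ] H := fun p => S 0 ^ p.2 * S p.1 with hB
  set w : {j : Fin N // j ≠ 0} × ℕ → H := fun p => adjoint (B p) ξ with hw
  have hiso : ∀ p, star (B p) * B p = 1 := by
    intro p
    have := Trel S hrel p.1 p.1 p.2 p.2
    rw [if_pos ⟨rfl, rfl⟩] at this
    exact this
  have hnormv : ∀ p, ‖B p (w p)‖ = ‖w p‖ := fun p =>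
    norm_apply_of_isom (B p) (hiso p) (w p)
  refine hasSum_of_orthogonal _ ξ ?_ ?_ ?_
  · intro p q hpq
    have h1 : ⟪B p (w p), B q (w q)⟫ = ⟪w p, adjoint (B p) (B q (w q))⟫ :=
      (adjoint_inner_right _ _ _).symm
    have h2 : adjoint (B p) (B q (w q)) = ((adjoint (B p)).comp (B q)) (w q) := rfl
    rw [h1, h2, hBrel S hrel p q, if_neg hpq]
    simp
  · intro p
    have h1 : ⟪ξ, B p (w p)⟫ = ⟪adjoint (B p) ξ, w p⟫ := (adjoint_inner_left _ _ _).symm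
    rw [h1]
    have h2 : adjoint (B p) ξ = w p := rfl
    rw [h2, inner_self_eq_norm_sq_to_K, hnormv p]
    push_cast
    rfl
  · have hs := norm_sq_hasSum S hrel hsum1 hshift ξ
    have he : (fun p : {j : Fin N // j ≠ 0} × ℕ => ‖adjoint (S 0 ^ p.2 * S p.1) ξ‖ ^ 2)
        = fun p => ‖B p (w p)‖ ^ 2 := funext fun p => by rw [hnormv p]
    rwa [he] at hs

include hrel hsum1 in
lemma partA (hshift : (⋂ n : ℕ, Set.range ⇑(S 0 ^ (n + 1))) = {0}) :
    (∀ (j₁ j₂ : Fin N), j₁ ≠ 0 → j₂ ≠ 0 → ∀ k₁ k₂ : ℕ,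
        (adjoint ((S 0 ^ k₁).comp (S j₁))).comp ((S 0 ^ k₂).comp (S j₂))
          = if j₁ = j₂ ∧ k₁ = k₂ then (1 : H →L[ℂ] H) else 0)
    ∧ (∀ ξ : H, HasSum
        (fun p : {j : Fin N // j ≠ 0} × ℕ =>
          ((S 0 ^ p.2).comp (S p.1)) (adjoint ((S 0 ^ p.2).comp (S p.1)) ξ)) ξ)
    ∧ (∀ ξ : H, HasSum
        (fun p : {j : Fin N // j ≠ 0} × ℕ =>
          ((S 0 ^ (p.2 + 1)).comp (S p.1)) (adjoint ((S 0 ^ p.2).comp (S p.1)) ξ)) (S 0 ξ))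
    ∧ (∀ j : Fin N, j ≠ 0 → (S 0 ^ 0).comp (S j) = S j) := by
  refine ⟨?_, ?_, ?_, ?_⟩
  · intro j₁ j₂ h₁ h₂ k₁ k₂
    have h := Trel S hrel ⟨j₁, h₁⟩ ⟨j₂, h₂⟩ k₁ k₂
    simp only [Subtype.mk.injEq] at h
    simpa only [star_eq_adjoint, mul_def] using h
  · exact fun ξ => partA_hasSum S hrel hsum1 hshift ξ
  · intro ξ
    have h := (partA_hasSum S hrel hsum1 hshift ξ).mapL (S 0)
    have he : (fun p : {j : Fin N // j ≠ 0} × ℕ =>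
        S 0 ((S 0 ^ p.2 * S p.1) (adjoint (S 0 ^ p.2 * S p.1) ξ)))
        = fun p => ((S 0 ^ (p.2 + 1)).comp (S p.1)) (adjoint ((S 0 ^ p.2).comp (S p.1)) ξ) := by
      funext p
      have h1 : (S 0 ^ (p.2 + 1)).comp (S p.1) = S 0 * (S 0 ^ p.2 * S p.1) := by
        rw [← mul_def, pow_succ', mul_assoc]
      rw [h1]
      rfl
    rwa [he] at h
  · intro j hj
    rw [pow_zero]
    ext x
    rfl
end CuntzAux3

namespace CuntzAuxB
open CuntzAux CuntzAux2 ContinuousLinearMap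
variable {H : Type*} [NormedAddCommGroup H] [InnerProductSpace ℂ H] [CompleteSpace H]
local notation "⟪" x ", " y "⟫" => @inner ℂ _ _ x y


lemma hasSum_single_eq {ι : Type*} [DecidableEq ι] (f : ι → H) (a : H) (p0 : ι) (b : H)
    (hf : ∀ p, f p = if p = p0 then b else 0) (h : HasSum f a) : a = b := by
  have h2 := hasSum_ite_eq p0 b
  rw [show (fun p => if p = p0 then b else 0) = f from funext fun p => (hf p).symm] at h2
  exact h.unique h2

variable {N : ℕ} [NeZero N] (T : {j : Fin N // j ≠ 0} → ℕ → H →L[ℂ] H)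
  (hrelT : ∀ j₁ j₂ k₁ k₂, (adjoint (T j₁ k₁)).comp (T j₂ k₂)
      = if j₁ = j₂ ∧ k₁ = k₂ then (1 : H →L[ℂ] H) else 0)
  (hsumT : ∀ ξ : H, HasSum
      (fun p : {j : Fin N // j ≠ 0} × ℕ =>
        (T p.1 p.2) (adjoint (T p.1 p.2) ξ)) ξ)
  (S : Fin N → H →L[ℂ] H)
  (hS0 : ∀ ξ : H, HasSum
      (fun p : {j : Fin N // j ≠ 0} × ℕ =>
        (T p.1 (p.2 + 1)) (adjoint (T p.1 p.2) ξ)) (S 0 ξ))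
  (hSj : ∀ (j : Fin N) (h : j ≠ 0), S j = T ⟨j, h⟩ 0)

include hrelT hS0 in
lemma L2 (p : {j : Fin N // j ≠ 0}) (k : ℕ) : (S 0).comp (T p k) = T p (k + 1) := by
  ext ξ
  simp only [comp_apply]
  have h := hS0 (T p k ξ)
  refine hasSum_single_eq _ _ ((p, k) : {j : Fin N // j ≠ 0} × ℕ) (T p (k + 1) ξ) ?_ h
  intro q
  have h1 : adjoint (T q.1 q.2) ((T p k) ξ) = ((adjoint (T q.1 q.2)).comp (T p k)) ξ := rfl
  rw [h1, hrelT q.1 p q.2 k]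
  by_cases hc : q.1 = p ∧ q.2 = k
  · rw [if_pos hc, if_pos (Prod.ext hc.1 hc.2), one_apply_eq_self, hc.1, hc.2]
  · rw [if_neg hc, if_neg (fun hh => hc ⟨congrArg Prod.fst hh, congrArg Prod.snd hh⟩)]
    simp

include hrelT hS0 in
lemma L3a (p : {j : Fin N // j ≠ 0}) : (adjoint (T p 0)).comp (S 0) = 0 := by
  ext ξ
  simp only [comp_apply, zero_apply]
  have h := (hS0 ξ).mapL (adjoint (T p 0))
  have hz : (fun q : {j : Fin N // j ≠ 0} × ℕ =>
      adjoint (T p 0) ((T q.1 (q.2 + 1)) (adjoint (T q.1 q.2) ξ))) = fun _ => (0 : H) := by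
    funext q
    have h1 : adjoint (T p 0) ((T q.1 (q.2 + 1)) (adjoint (T q.1 q.2) ξ))
        = ((adjoint (T p 0)).comp (T q.1 (q.2 + 1))) (adjoint (T q.1 q.2) ξ) := rfl
    rw [h1, hrelT p q.1 0 (q.2 + 1), if_neg (by omega)]
    simp
  rw [hz] at h
  exact h.unique hasSum_zero

include hrelT hS0 in
lemma L3b (p : {j : Fin N // j ≠ 0}) (k : ℕ) :
    (adjoint (T p (k + 1))).comp (S 0) = adjoint (T p k) := by
  ext ξ
  simp only [comp_apply]
  have h := (hS0 ξ).mapL (adjoint (T p (k + 1)))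
  refine hasSum_single_eq _ _ ((p, k) : {j : Fin N // j ≠ 0} × ℕ) (adjoint (T p k) ξ) ?_ h
  intro q
  have h1 : adjoint (T p (k + 1)) ((T q.1 (q.2 + 1)) (adjoint (T q.1 q.2) ξ))
      = ((adjoint (T p (k + 1))).comp (T q.1 (q.2 + 1))) (adjoint (T q.1 q.2) ξ) := rfl
  rw [h1, hrelT p q.1 (k + 1) (q.2 + 1)]
  by_cases hc : q = (p, k)
  · subst hc
    rw [if_pos ⟨rfl, rfl⟩, if_pos rfl, one_apply_eq_self]
  · rw [if_neg (fun hh => hc (Prod.ext hh.1.symm (by omega))), if_neg hc]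
    simp

include hrelT hsumT hS0 in
lemma innerS0 (ξ η : H) : ⟪S 0 ξ, S 0 η⟫ = ⟪ξ, η⟫ := by
  have h1 := (hS0 η).mapL (innerSL ℂ (S 0 ξ))
  have h2 := (hsumT η).mapL (innerSL ℂ ξ)
  have he : (fun q : {j : Fin N // j ≠ 0} × ℕ =>
      (innerSL ℂ (S 0 ξ)) ((T q.1 (q.2 + 1)) (adjoint (T q.1 q.2) η)))
      = fun q => (innerSL ℂ ξ) ((T q.1 q.2) (adjoint (T q.1 q.2) η)) := by
    funext q
    show ⟪S 0 ξ, (T q.1 (q.2 + 1)) (adjoint (T q.1 q.2) η)⟫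
        = ⟪ξ, (T q.1 q.2) (adjoint (T q.1 q.2) η)⟫
    rw [← adjoint_inner_left (T q.1 (q.2 + 1))]
    have h3 : adjoint (T q.1 (q.2 + 1)) (S 0 ξ)
        = ((adjoint (T q.1 (q.2 + 1))).comp (S 0)) ξ := rfl
    rw [h3, L3b T hrelT S hS0, ← adjoint_inner_left (T q.1 q.2)]
  rw [he] at h1
  exact h1.unique h2

include hrelT hsumT hS0 hSj in
lemma hrelS (i j : Fin N) :
    (adjoint (S i)).comp (S j) = if i = j then (1 : H →L[ℂ] H) else 0 := by
  by_cases hi : i = 0 <;> by_cases hj : j = 0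
  · subst hi; subst hj
    rw [if_pos rfl]
    ext η
    refine ext_inner_left ℂ fun ξ => ?_
    rw [comp_apply, adjoint_inner_right, one_apply_eq_self, innerS0 T hrelT hsumT S hS0]
  · subst hi
    rw [if_neg (Ne.symm hj)]
    ext η
    refine ext_inner_left ℂ fun ξ => ?_
    rw [comp_apply, adjoint_inner_right, hSj j hj, zero_apply, inner_zero_right]
    rw [← adjoint_inner_left (T ⟨j, hj⟩ 0)]
    have h3 : adjoint (T ⟨j, hj⟩ 0) (S 0 ξ) = ((adjoint (T ⟨j, hj⟩ 0)).comp (S 0)) ξ := rfl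
    rw [h3, L3a T hrelT S hS0]
    simp
  · subst hj
    rw [if_neg hi, hSj i hi, L3a T hrelT S hS0]
  · rw [hSj i hi, hSj j hj, hrelT ⟨i, hi⟩ ⟨j, hj⟩ 0 0]
    by_cases hij : i = j
    · rw [if_pos ⟨Subtype.ext hij, rfl⟩, if_pos hij]
    · rw [if_neg (fun hh => hij (congrArg Subtype.val hh.1)), if_neg hij]

include hrelT hS0 hSj in
lemma hTk (j : Fin N) (h : j ≠ 0) (k : ℕ) : T ⟨j, h⟩ k = (S 0 ^ k).comp (S j) := by
  induction k with
  | zero =>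
      rw [pow_zero, hSj j h]
      ext x
      rfl
  | succ k ih =>
      rw [← L2 T hrelT S hS0 ⟨j, h⟩ k, ih]
      rw [← mul_def, ← mul_def, ← mul_def, pow_succ', mul_assoc]
end CuntzAuxB

namespace CuntzAuxB
open CuntzAux CuntzAux2 ContinuousLinearMap
variable {H : Type*} [NormedAddCommGroup H] [InnerProductSpace ℂ H] [CompleteSpace H]
local notation "⟪" x ", " y "⟫" => @inner ℂ _ _ x y
variable {N : ℕ} [NeZero N] (T : {j : Fin N // j ≠ 0} → ℕ → H →L[ℂ] H)
  (hrelT : ∀ j₁ j₂ k₁ k₂, (adjoint (T j₁ k₁)).comp (T j₂ k₂)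
      = if j₁ = j₂ ∧ k₁ = k₂ then (1 : H →L[ℂ] H) else 0)
  (hsumT : ∀ ξ : H, HasSum
      (fun p : {j : Fin N // j ≠ 0} × ℕ =>
        (T p.1 p.2) (adjoint (T p.1 p.2) ξ)) ξ)
  (S : Fin N → H →L[ℂ] H)
  (hS0 : ∀ ξ : H, HasSum
      (fun p : {j : Fin N // j ≠ 0} × ℕ =>
        (T p.1 (p.2 + 1)) (adjoint (T p.1 p.2) ξ)) (S 0 ξ))
  (hSj : ∀ (j : Fin N) (h : j ≠ 0), S j = T ⟨j, h⟩ 0)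

set_option maxHeartbeats 1000000 in
include hrelT hsumT hS0 hSj in
lemma hsum2 : ∑ i, (S i).comp (adjoint (S i)) = (1 : H →L[ℂ] H) := by
  have hinj : Function.Injective
      (fun p : {j : Fin N // j ≠ 0} × ℕ => ((p.1, p.2 + 1) : {j : Fin N // j ≠ 0} × ℕ)) := by
    intro a b h
    simp only [Prod.mk.injEq] at h
    exact Prod.ext h.1 (by omega)
  have key : ∀ η : H, S 0 (adjoint (S 0) η)
      + ∑ j : {j : Fin N // j ≠ 0}, (T j 0) (adjoint (T j 0) η) = η := by
    intro η
    -- the isometries T p with orthogonal ranges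
    have hiso : ∀ p : {j : Fin N // j ≠ 0} × ℕ, ∀ x : H, ‖T p.1 p.2 x‖ = ‖x‖ := by
      intro p x
      refine CuntzAux.norm_apply_of_isom (T p.1 p.2) ?_ x
      rw [star_eq_adjoint, mul_def, hrelT, if_pos ⟨rfl, rfl⟩]
    set V : {j : Fin N // j ≠ 0} × ℕ → H →ₗᵢ[ℂ] H :=
      fun p => ⟨(T p.1 p.2 : H →L[ℂ] H), hiso p⟩ with hV
    have hOrth : OrthogonalFamily ℂ (fun _ : {j : Fin N // j ≠ 0} × ℕ => H) V := by
      intro p q hpq x y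
      show ⟪T p.1 p.2 x, T q.1 q.2 y⟫ = 0
      rw [← adjoint_inner_right]
      have h1 : adjoint (T p.1 p.2) ((T q.1 q.2) y)
          = ((adjoint (T p.1 p.2)).comp (T q.1 q.2)) y := rfl
      rw [h1, hrelT, if_neg (fun hh => hpq (Prod.ext hh.1 hh.2))]
      simp
    -- square norms of the full family sum to ‖η‖²
    have hfull : HasSum (fun p : {j : Fin N // j ≠ 0} × ℕ =>
        ‖adjoint (T p.1 p.2) η‖ ^ 2) (‖η‖ ^ 2) := by
      have h := (hsumT η).mapL (innerSL ℂ η)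
      have he : (fun p : {j : Fin N // j ≠ 0} × ℕ =>
          (innerSL ℂ η) ((T p.1 p.2) (adjoint (T p.1 p.2) η)))
          = fun p => ((‖adjoint (T p.1 p.2) η‖ ^ 2 : ℝ) : ℂ) := by
        funext p
        show ⟪η, (T p.1 p.2) (adjoint (T p.1 p.2) η)⟫ = _
        rw [← adjoint_inner_left (T p.1 p.2), inner_self_eq_norm_sq_to_K]
        push_cast
        rfl
      rw [he] at h
      have h2 := h.mapL Complex.reCLM
      have he2 : (fun p : {j : Fin N // j ≠ 0} × ℕ =>
          Complex.reCLM ((‖adjoint (T p.1 p.2) η‖ ^ 2 : ℝ) : ℂ))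
          = fun p => ‖adjoint (T p.1 p.2) η‖ ^ 2 := by
        funext p; exact Complex.ofReal_re _
      rw [he2] at h2
      have hval : Complex.reCLM ((innerSL ℂ η) η) = ‖η‖ ^ 2 :=
        inner_self_eq_norm_sq (𝕜 := ℂ) η
      rwa [hval] at h2
    have hsq : Summable (fun p : {j : Fin N // j ≠ 0} × ℕ =>
        ‖adjoint (T p.1 (p.2 + 1)) η‖ ^ 2) := by
      have h0 := hfull.summable.comp_injective hinj
      exact h0.congr fun p => rfl
    have hsummable : Summable (fun p : {j : Fin N // j ≠ 0} × ℕ =>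
        (T p.1 p.2) (adjoint (T p.1 (p.2 + 1)) η)) := by
      have := (hOrth.summable_iff_norm_sq_summable
        (fun p => adjoint (T p.1 (p.2 + 1)) η)).mpr hsq
      exact this
    have hσ := hsummable.hasSum
    set σ := ∑' p : {j : Fin N // j ≠ 0} × ℕ, (T p.1 p.2) (adjoint (T p.1 (p.2 + 1)) η) with hσdef
    -- σ = adjoint (S 0) η
    have hσadj : σ = adjoint (S 0) η := by
      refine ext_inner_left ℂ fun ξ => ?_
      have hL := hσ.mapL (innerSL ℂ ξ)
      have hR := ((hS0 ξ).mapL (innerSL ℂ η)).star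
      have he3 : (fun p : {j : Fin N // j ≠ 0} × ℕ =>
          star ((innerSL ℂ η) ((T p.1 (p.2 + 1)) (adjoint (T p.1 p.2) ξ))))
          = fun p => (innerSL ℂ ξ) ((T p.1 p.2) (adjoint (T p.1 (p.2 + 1)) η)) := by
        funext p
        show star ⟪η, (T p.1 (p.2 + 1)) (adjoint (T p.1 p.2) ξ)⟫
            = ⟪ξ, (T p.1 p.2) (adjoint (T p.1 (p.2 + 1)) η)⟫
        rw [RCLike.star_def, inner_conj_symm, ← adjoint_inner_right (T p.1 (p.2 + 1)),
          adjoint_inner_left]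
      rw [he3] at hR
      have huniq := hL.unique hR
      show ⟪ξ, σ⟫ = ⟪ξ, adjoint (S 0) η⟫
      have h4 : ⟪ξ, σ⟫ = star ⟪η, S 0 ξ⟫ := huniq
      rw [h4, RCLike.star_def, inner_conj_symm, adjoint_inner_right]
    have hσ' : HasSum (fun p : {j : Fin N // j ≠ 0} × ℕ =>
        (T p.1 p.2) (adjoint (T p.1 (p.2 + 1)) η)) (adjoint (S 0) η) := hσadj ▸ hσ
    have happ := hσ'.mapL (S 0)
    have he4 : (fun p : {j : Fin N // j ≠ 0} × ℕ =>
        S 0 ((T p.1 p.2) (adjoint (T p.1 (p.2 + 1)) η)))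
        = fun p => (T p.1 (p.2 + 1)) (adjoint (T p.1 (p.2 + 1)) η) := by
      funext p
      rw [← L2 T hrelT S hS0 p.1 p.2]
      rfl
    rw [he4] at happ
    -- now split the full sum
    set g : {j : Fin N // j ≠ 0} × ℕ → H :=
      fun p => (T p.1 p.2) (adjoint (T p.1 p.2) η) with hg
    set g' : {j : Fin N // j ≠ 0} × ℕ → H :=
      fun p => if p.2 = 0 then 0 else g p with hg'
    have hge : (fun p : {j : Fin N // j ≠ 0} × ℕ =>
        (T p.1 (p.2 + 1)) (adjoint (T p.1 (p.2 + 1)) η))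
        = g' ∘ (fun p : {j : Fin N // j ≠ 0} × ℕ => (p.1, p.2 + 1)) := by
      funext p
      show _ = g' (p.1, p.2 + 1)
      rw [hg']
      simp only []
      rw [if_neg (by omega)]
    rw [hge] at happ
    have h0 : ∀ x ∉ Set.range (fun p : {j : Fin N // j ≠ 0} × ℕ =>
        ((p.1, p.2 + 1) : {j : Fin N // j ≠ 0} × ℕ)), g' x = 0 := by
      intro x hx
      by_cases hx2 : x.2 = 0
      · rw [hg']; simp only []; rw [if_pos hx2]
      · refine absurd ⟨(x.1, x.2 - 1), ?_⟩ hx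
        show (x.1, x.2 - 1 + 1) = x
        exact Prod.ext rfl (by omega)
    have hg'sum : HasSum g' (S 0 (adjoint (S 0) η)) :=
      (Function.Injective.hasSum_iff hinj h0).mp happ
    have hfin : HasSum (fun p : {j : Fin N // j ≠ 0} × ℕ => if p.2 = 0 then g p else 0)
        (∑ j : {j : Fin N // j ≠ 0}, g (j, 0)) := by
      have hvan : ∀ b ∉ ((Finset.univ : Finset {j : Fin N // j ≠ 0}) ×ˢ ({0} : Finset ℕ)),
          (if b.2 = 0 then g b else 0) = 0 := by
        intro b hb
        rw [if_neg]
        intro hb2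
        exact hb (Finset.mem_product.mpr ⟨Finset.mem_univ _, Finset.mem_singleton.mpr hb2⟩)
      have h5 := hasSum_sum_of_ne_finset_zero (L := SummationFilter.unconditional _) hvan
      have hval : ∑ b ∈ ((Finset.univ : Finset {j : Fin N // j ≠ 0}) ×ˢ ({0} : Finset ℕ)),
          (if b.2 = 0 then g b else 0) = ∑ j : {j : Fin N // j ≠ 0}, g (j, 0) := by
        rw [Finset.sum_product]
        refine Finset.sum_congr rfl fun j _ => ?_
        rw [Finset.sum_singleton, if_pos rfl]
      rwa [hval] at h5
    have hcomb := hg'sum.add hfin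
    have he5 : (fun p : {j : Fin N // j ≠ 0} × ℕ => g' p + if p.2 = 0 then g p else 0) = g := by
      funext p
      rw [hg']
      by_cases h : p.2 = 0
      · simp only []; rw [if_pos h, if_pos h, zero_add]
      · simp only []; rw [if_neg h, if_neg h, add_zero]
    rw [he5] at hcomb
    exact ((hsumT η).unique hcomb).symm
  ext η
  rw [ContinuousLinearMap.sum_apply, one_apply_eq_self]
  have hsplit := Finset.add_sum_erase Finset.univ
    (fun i => ((S i).comp (adjoint (S i))) η) (Finset.mem_univ (0 : Fin N))
  have herase : ∑ i ∈ Finset.univ.erase (0 : Fin N), ((S i).comp (adjoint (S i))) η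
      = ∑ j : {j : Fin N // j ≠ 0}, (T j 0) (adjoint (T j 0) η) := by
    rw [Finset.sum_subtype (p := fun j : Fin N => j ≠ 0) (s := Finset.univ.erase 0)
      (f := fun i => ((S i).comp (adjoint (S i))) η) (fun x => by simp)]
    refine Finset.sum_congr rfl fun j _ => ?_
    rw [comp_apply, hSj (j : Fin N) j.2, Subtype.coe_eta]
  rw [← hsplit, herase]
  show ((S 0).comp (adjoint (S 0))) η + _ = η
  rw [comp_apply]
  exact key η

include hrelT hsumT hS0 hSj in
lemma hshiftS : (⋂ n : ℕ, Set.range ⇑(S 0 ^ (n + 1))) = {0} := by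
  have hrelS' := hrelS T hrelT hsumT S hS0 hSj
  apply Set.eq_of_subset_of_subset
  · intro ξ hξ
    have hzero : ∀ p : {j : Fin N // j ≠ 0} × ℕ, adjoint (T p.1 p.2) ξ = 0 := by
      intro p
      obtain ⟨η, hη⟩ := Set.mem_iInter.mp hξ p.2
      have ht := hTk T hrelT S hS0 hSj (p.1 : Fin N) p.1.2 p.2
      rw [Subtype.coe_eta] at ht
      rw [ht, ← hη]
      have h1 : adjoint ((S 0 ^ p.2).comp (S (p.1 : Fin N))) ((S 0 ^ (p.2 + 1)) η)
          = adjoint (S (p.1 : Fin N)) (adjoint (S 0 ^ p.2) ((S 0 ^ (p.2 + 1)) η)) := by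
        rw [adjoint_comp]; rfl
      have h2 : adjoint (S 0 ^ p.2) ((S 0 ^ (p.2 + 1)) η)
          = ((star (S 0 ^ p.2)) * (S 0 ^ (p.2 + 1))) η := by
        rw [star_eq_adjoint]; rfl
      rw [h1, h2, CuntzAux.hshiftpow S hrelS' p.2 1, pow_one]
      have h3 : adjoint (S (p.1 : Fin N)) (S 0 η)
          = ((adjoint (S (p.1 : Fin N))).comp (S 0)) η := rfl
      rw [h3, hrelS' (p.1 : Fin N) 0, if_neg p.1.2]
      simp
    have h := hsumT ξ
    have hz : (fun p : {j : Fin N // j ≠ 0} × ℕ => (T p.1 p.2) (adjoint (T p.1 p.2) ξ))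
        = fun _ => (0 : H) := funext fun p => by rw [hzero p]; simp
    rw [hz] at h
    exact Set.mem_singleton_iff.mpr (h.unique hasSum_zero)
  · intro x hx
    rw [Set.mem_singleton_iff] at hx
    subst hx
    exact Set.mem_iInter.mpr fun n => ⟨0, map_zero _⟩
end CuntzAuxB

end CuntzAuxSection

/-- **Lemma 4.1.** A 1–1 correspondence between Cuntz families `S₀, …, S_{N-1}` with `S₀` a
shift, and `𝒪_∞`-families `T_k^{(j)}` (`j = 1, …, N-1`, `k ≥ 1`; here `T j k` denotes
`T_{k+1}^{(j)}`) whose ranges sum to `1`.  The correspondence is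
`T_k^{(j)} = S₀^{k-1} S_j`, `S₀ = ∑ T_{k+1}^{(j)} T_k^{(j)*}`, `S_j = T₁^{(j)}`. -/
theorem cuntz_with_shift_iff_Oinfinity_family
    (N : ℕ) (hN : 2 ≤ N) [NeZero N]
    {H : Type*} [NormedAddCommGroup H] [InnerProductSpace ℂ H] [CompleteSpace H] :
    -- (a) from a Cuntz family with `S₀` a shift to an `𝒪_∞`-family
    (∀ S : Fin N → H →L[ℂ] H,
      (∀ i j, (ContinuousLinearMap.adjoint (S i)).comp (S j)
          = if i = j then (1 : H →L[ℂ] H) else 0) →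
      (∑ i, (S i).comp (ContinuousLinearMap.adjoint (S i)) = (1 : H →L[ℂ] H)) →
      ((⋂ n : ℕ, Set.range ⇑(S 0 ^ (n + 1))) = {0}) →
      ((∀ (j₁ j₂ : Fin N), j₁ ≠ 0 → j₂ ≠ 0 → ∀ k₁ k₂ : ℕ,
          (ContinuousLinearMap.adjoint ((S 0 ^ k₁).comp (S j₁))).comp ((S 0 ^ k₂).comp (S j₂))
            = if j₁ = j₂ ∧ k₁ = k₂ then (1 : H →L[ℂ] H) else 0)
        ∧ (∀ ξ : H, HasSum
            (fun p : {j : Fin N // j ≠ 0} × ℕ =>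
              ((S 0 ^ p.2).comp (S p.1))
                (ContinuousLinearMap.adjoint ((S 0 ^ p.2).comp (S p.1)) ξ)) ξ)
        ∧ (∀ ξ : H, HasSum
            (fun p : {j : Fin N // j ≠ 0} × ℕ =>
              ((S 0 ^ (p.2 + 1)).comp (S p.1))
                (ContinuousLinearMap.adjoint ((S 0 ^ p.2).comp (S p.1)) ξ)) (S 0 ξ))
        ∧ (∀ j : Fin N, j ≠ 0 → (S 0 ^ 0).comp (S j) = S j)))
    ∧
    -- (b) from an `𝒪_∞`-family back to a Cuntz family with `S₀` a shift
    (∀ T : {j : Fin N // j ≠ 0} → ℕ → H →L[ℂ] H,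
      (∀ j₁ j₂ k₁ k₂, (ContinuousLinearMap.adjoint (T j₁ k₁)).comp (T j₂ k₂)
          = if j₁ = j₂ ∧ k₁ = k₂ then (1 : H →L[ℂ] H) else 0) →
      (∀ ξ : H, HasSum
          (fun p : {j : Fin N // j ≠ 0} × ℕ =>
            (T p.1 p.2) (ContinuousLinearMap.adjoint (T p.1 p.2) ξ)) ξ) →
      ∀ S : Fin N → H →L[ℂ] H,
        (∀ ξ : H, HasSum
            (fun p : {j : Fin N // j ≠ 0} × ℕ =>
              (T p.1 (p.2 + 1)) (ContinuousLinearMap.adjoint (T p.1 p.2) ξ)) (S 0 ξ)) →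
        (∀ (j : Fin N) (h : j ≠ 0), S j = T ⟨j, h⟩ 0) →
        ((∀ i j, (ContinuousLinearMap.adjoint (S i)).comp (S j)
            = if i = j then (1 : H →L[ℂ] H) else 0)
          ∧ (∑ i, (S i).comp (ContinuousLinearMap.adjoint (S i)) = (1 : H →L[ℂ] H))
          ∧ ((⋂ n : ℕ, Set.range ⇑(S 0 ^ (n + 1))) = {0})
          ∧ (∀ (j : Fin N) (h : j ≠ 0) (k : ℕ), T ⟨j, h⟩ k = (S 0 ^ k).comp (S j)))) := by
  constructor
  · intro S hrel hsum1 hshift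
    exact CuntzAux3.partA S hrel hsum1 hshift
  · intro T hrelT hsumT S hS0 hSj
    exact ⟨CuntzAuxB.hrelS T hrelT hsumT S hS0 hSj,
      CuntzAuxB.hsum2 T hrelT hsumT S hS0 hSj,
      CuntzAuxB.hshiftS T hrelT hsumT S hS0 hSj,
      CuntzAuxB.hTk T hrelT S hS0 hSj⟩
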